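/- Let p be holomorphic on the unit disk D with p(0) = 1 and power series p(z) = 1 + ∑_{n≥1} b_n z^n, and let 0 ≤ α < 1. If Re p(z) ≥ α for all z ∈ D, then |b_3 - b_1 b_2/(1-α) + b_1³/(4(1-α)²)| ≤ 2(1-α) - |b_1|²/(2(1-α)). -/

import Mathlib

open Complex Metric Filter Function Asymptotics

private lemma dslope_factor_ev {F G : ℂ → ℂ} (hG : ContinuousAt G 0)
    (h : ∀ᶠ z in nhds (0:ℂ), F z = F 0 + z * G z) :
    dslope F 0 =ᶠ[nhds (0:ℂ)] G := by
  have hD : HasDerivAt F (G 0) 0 := by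
    rw [hasDerivAt_iff_isLittleO]
    have h1 : (fun z : ℂ => F z - F 0 - (z - 0) • G 0) =ᶠ[nhds 0]
        fun z => (G z - G 0) * z := by
      filter_upwards [h] with z hz
      rw [hz]; simp [smul_eq_mul]; ring
    have h2 : (fun z : ℂ => G z - G 0) =o[nhds 0] (fun _ => (1:ℂ)) := by
      rw [Asymptotics.isLittleO_one_iff]
      simpa using hG.tendsto.sub_const (G 0)
    have h3 := h2.mul_isBigO (Asymptotics.isBigO_refl (fun z : ℂ => z) (nhds 0))
    refine h1.trans_isLittleO ?_
    simpa using h3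
  filter_upwards [h] with z hz
  rcases eq_or_ne z 0 with rfl | hz0
  · rw [dslope_same, hD.deriv]
  · rw [dslope_of_ne _ hz0, slope_def_field, hz]
    field_simp
    ring
  
private lemma dslope_congr_ev {F G : ℂ → ℂ} (h : F =ᶠ[nhds (0:ℂ)] G) :
    dslope F 0 =ᶠ[nhds (0:ℂ)] dslope G 0 := by
  have h0 : F 0 = G 0 := h.eq_of_nhds
  have hd : deriv F 0 = deriv G 0 := h.deriv_eq
  filter_upwards [h] with z hz
  rcases eq_or_ne z 0 with rfl | hz0
  · simpa [dslope_same] using hd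
  · rw [dslope_of_ne _ hz0, dslope_of_ne _ hz0, slope_def_field, slope_def_field, hz, h0]

private lemma schur_dslope_bound {f : ℂ → ℂ} (hd : DifferentiableOn ℂ f (ball (0:ℂ) 1))
    (hb : ∀ z ∈ ball (0:ℂ) 1, ‖f z‖ ≤ 1) (h0 : f 0 = 0)
    {z : ℂ} (hz : z ∈ ball (0:ℂ) 1) : ‖dslope f 0 z‖ ≤ 1 := by
  by_contra hlt
  push_neg at hlt
  obtain ⟨R, hR1, hR2⟩ := exists_between hlt
  have hm : Set.MapsTo f (ball (0:ℂ) 1) (ball (f 0) R) := fun w hw => by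
    rw [h0, mem_ball, dist_zero_right]
    exact lt_of_le_of_lt (hb w hw) hR1
  have h := Complex.norm_dslope_le_div_of_mapsTo_ball hd (hm.mono_right ball_subset_closedBall) hz
  rw [div_one] at h
  exact absurd h (not_le.mpr hR2)

private lemma mobius_bound {a b : ℂ} (ha : ‖a‖ ≤ 1) (hb : ‖b‖ ≤ 1) :
    ‖a - b‖ ≤ ‖1 - (starRingEnd ℂ) b * a‖ := by
  have h1 : Complex.normSq a ≤ 1 := by
    rw [Complex.normSq_eq_norm_sq]; nlinarith [norm_nonneg a]
  have h2 : Complex.normSq b ≤ 1 := by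
    rw [Complex.normSq_eq_norm_sq]; nlinarith [norm_nonneg b]
  have key' : ((Complex.normSq (1 - (starRingEnd ℂ) b * a) - Complex.normSq (a - b) : ℝ) : ℂ)
      = (((1 - Complex.normSq a) * (1 - Complex.normSq b) : ℝ) : ℂ) := by
    push_cast [← Complex.mul_conj]
    simp only [map_sub, map_mul, map_one, Complex.conj_conj]
    ring
  have key := Complex.ofReal_inj.mp key'
  rw [Complex.norm_def, Complex.norm_def]
  apply Real.sqrt_le_sqrt
  nlinarith [key, h1, h2]

private lemma deriv_zero_of_even {f : ℂ → ℂ} (h : ∀ z, f (-z) = f z) : deriv f 0 = 0 := by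
  have h1 : deriv (fun z : ℂ => f (-z)) 0 = -deriv f 0 := by
    rw [deriv_comp_neg]; simp
  have h2 : (fun z : ℂ => f (-z)) = f := funext h
  rw [h2] at h1
  have h3 : (2:ℂ) * deriv f 0 = 0 := by linear_combination h1
  simpa using h3

private lemma dslope_const' (c : ℂ) :
    dslope (Function.const ℂ c) 0 = Function.const ℂ (0:ℂ) := by
  funext z
  rcases eq_or_ne z 0 with rfl | hz
  · rw [dslope_same]
    show deriv (fun _ : ℂ => c) 0 = 0
    exact deriv_const 0 c
  · rw [dslope_of_ne _ hz, slope_def_field]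
    simp

private lemma schur_coeff2 {g : ℂ → ℂ} (hg : DifferentiableOn ℂ g (ball (0:ℂ) 1))
    (hgb : ∀ z ∈ ball (0:ℂ) 1, ‖g z‖ ≤ 1) :
    ‖dslope (dslope g 0) 0 0‖ ≤ 1 - ‖g 0‖ ^ 2 := by
  have hD : ball (0:ℂ) 1 ∈ nhds (0:ℂ) := ball_mem_nhds _ one_pos
  have h0D : (0:ℂ) ∈ ball (0:ℂ) 1 := mem_ball_self one_pos
  set u : ℂ := g 0 with hu
  have hu1 : ‖u‖ ≤ 1 := hgb 0 h0D
  by_cases hcase : ‖u‖ = 1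
  · -- g is constant by maximum modulus
    have hmax : IsMaxOn (norm ∘ g) (ball (0:ℂ) 1) 0 := by
      intro z hz
      simp only [Function.comp_apply, Set.mem_setOf_eq]
      rw [← hu, hcase]; exact hgb z hz
    have hconst : Set.EqOn g (Function.const ℂ u) (ball (0:ℂ) 1) :=
      Complex.eqOn_of_isPreconnected_of_isMaxOn_norm (convex_ball _ _).isPreconnected
        isOpen_ball hg h0D hmax
    have hev : g =ᶠ[nhds (0:ℂ)] Function.const ℂ u := eventually_of_mem hD hconst
    have e1 : dslope g 0 =ᶠ[nhds (0:ℂ)] dslope (Function.const ℂ u) 0 := dslope_congr_ev hev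
    have e1' : dslope g 0 =ᶠ[nhds (0:ℂ)] Function.const ℂ (0:ℂ) := by
      rwa [dslope_const'] at e1
    have e3 : dslope (dslope g 0) 0 =ᶠ[nhds (0:ℂ)] dslope (Function.const ℂ (0:ℂ)) 0 :=
      dslope_congr_ev e1'
    have e3' : dslope (dslope g 0) 0 =ᶠ[nhds (0:ℂ)] Function.const ℂ (0:ℂ) := by
      rwa [dslope_const'] at e3
    have : dslope (dslope g 0) 0 0 = 0 := e3'.eq_of_nhds
    rw [this, hcase]
    simp
  · have hu1' : ‖u‖ < 1 := lt_of_le_of_ne hu1 hcase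
    -- even part
    set E : ℂ → ℂ := fun z => (g z + g (-z)) / 2 with hE
    have hgneg : DifferentiableOn ℂ (fun z => g (-z)) (ball (0:ℂ) 1) := by
      apply DifferentiableOn.comp hg (differentiable_neg.differentiableOn)
      intro z hz
      simpa [mem_ball_zero_iff] using hz
    have hEd : DifferentiableOn ℂ E (ball (0:ℂ) 1) := ((hg.add hgneg).div_const 2)
    have hEb : ∀ z ∈ ball (0:ℂ) 1, ‖E z‖ ≤ 1 := by
      intro z hz
      have hz' : -z ∈ ball (0:ℂ) 1 := by simpa [mem_ball_zero_iff] using hz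
      have h1 := norm_add_le (g z) (g (-z))
      have h2 : ‖E z‖ = ‖g z + g (-z)‖ / 2 := by
        rw [hE]; simp [map_div₀]
      have := hgb z hz; have := hgb _ hz'
      rw [h2]; linarith
    have hE0 : E 0 = u := by rw [hE]; simp [← hu]
    have hEeven : ∀ z, E (-z) = E z := by intro z; rw [hE]; simp only [neg_neg]; ring
    -- the Mobius transform h
    have hdenne : ∀ z ∈ ball (0:ℂ) 1, 1 - (starRingEnd ℂ) u * E z ≠ 0 := by
      intro z hz hc
      have h1 : ‖(starRingEnd ℂ) u * E z‖ ≤ ‖u‖ := by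
        rw [norm_mul, Complex.norm_conj]
        calc ‖u‖ * ‖E z‖ ≤ ‖u‖ * 1 := by
              gcongr; exact hEb z hz
          _ = ‖u‖ := mul_one _
      have h2 : (starRingEnd ℂ) u * E z = 1 := by linear_combination -hc
      rw [h2] at h1; simp at h1; linarith
    set h : ℂ → ℂ := fun z => (E z - u) / (1 - (starRingEnd ℂ) u * E z) with hh
    have hhd : DifferentiableOn ℂ h (ball (0:ℂ) 1) :=
      (hEd.sub_const u).div ((differentiableOn_const _).sub
        ((differentiableOn_const _).mul hEd)) hdenne
    have hh0 : h 0 = 0 := by rw [hh]; simp [hE0]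
    have hhb : ∀ z ∈ ball (0:ℂ) 1, ‖h z‖ ≤ 1 := by
      intro z hz
      rw [hh]
      simp only [norm_div]
      rw [div_le_one_iff]
      left
      exact ⟨norm_pos_iff.mpr (hdenne z hz), mobius_bound (hEb z hz) hu1⟩
    have hheven : ∀ z, h (-z) = h z := by intro z; rw [hh]; simp [hEeven]
    -- iterated dslopes of h
    set kh : ℂ → ℂ := dslope h 0 with hkh
    have hkhd : DifferentiableOn ℂ kh (ball (0:ℂ) 1) :=
      (differentiableOn_dslope hD).mpr hhd
    have hkhb : ∀ z ∈ ball (0:ℂ) 1, ‖kh z‖ ≤ 1 := fun z hz =>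
      schur_dslope_bound hhd hhb hh0 hz
    have hkh0 : kh 0 = 0 := by
      rw [hkh, dslope_same]
      exact deriv_zero_of_even hheven
    set mh : ℂ → ℂ := dslope kh 0 with hmh
    have hmhb : ‖mh 0‖ ≤ 1 :=
      schur_dslope_bound hkhd hkhb hkh0 h0D
    -- factorizations
    have hzh : ∀ z : ℂ, h z = z * kh z := by
      intro z
      rcases eq_or_ne z 0 with rfl | hz0
      · simp [hh0]
      · rw [hkh, dslope_of_ne _ hz0, slope_def_field, hh0]
        field_simp
        ring
    have hzkh : ∀ z : ℂ, kh z = z * mh z := by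
      intro z
      rcases eq_or_ne z 0 with rfl | hz0
      · simp [hkh0]
      · rw [hmh, dslope_of_ne _ hz0, slope_def_field, hkh0]
        field_simp
        ring
    -- express E through h : E z = u + h z * (1 - conj u * E z)
    have hEfact : ∀ z ∈ ball (0:ℂ) 1,
        E z = u + h z * (1 - (starRingEnd ℂ) u * E z) := by
      intro z hz
      rw [hh]
      simp only
      rw [div_mul_cancel₀ _ (hdenne z hz)]
      ring
    -- the chain for E
    set E₂ : ℂ → ℂ := fun z => kh z * (1 - (starRingEnd ℂ) u * E z) with hE₂
    set E₃ : ℂ → ℂ := fun z => mh z * (1 - (starRingEnd ℂ) u * E z) with hE₃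
    have hEcont : ContinuousAt E 0 := (hEd.differentiableAt hD).continuousAt
    have hkhcont : ContinuousAt kh 0 := (hkhd.differentiableAt hD).continuousAt
    have hmhcont : ContinuousAt mh 0 :=
      (((differentiableOn_dslope hD).mpr hkhd).differentiableAt hD).continuousAt
    have hdencont : ContinuousAt (fun z => 1 - (starRingEnd ℂ) u * E z) 0 :=
      (continuousAt_const.sub (continuousAt_const.mul hEcont))
    have hE₂cont : ContinuousAt E₂ 0 := hkhcont.mul hdencont
    have hE₃cont : ContinuousAt E₃ 0 := hmhcont.mul hdencont
    have ev1 : dslope E 0 =ᶠ[nhds (0:ℂ)] E₂ := by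
      apply dslope_factor_ev hE₂cont
      filter_upwards [hD] with z hz
      rw [hE0]
      simp only [hE₂]
      have h1 := hEfact z hz
      rw [hzh z] at h1
      linear_combination h1
    have hE₂0 : E₂ 0 = 0 := by rw [hE₂]; simp [hkh0]
    have ev2 : dslope E₂ 0 =ᶠ[nhds (0:ℂ)] E₃ := by
      apply dslope_factor_ev hE₃cont
      filter_upwards [hD] with z hz
      rw [hE₂0, zero_add]
      simp only [hE₂, hE₃]
      linear_combination (1 - (starRingEnd ℂ) u * E z) * hzkh z
    -- odd part vanishes
    set O : ℂ → ℂ := fun z => (g z - g (-z)) / 2 with hO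
    have hOd : DifferentiableOn ℂ O (ball (0:ℂ) 1) := ((hg.sub hgneg).div_const 2)
    have hO0 : O 0 = 0 := by rw [hO]; simp
    have hOodd : ∀ z, O (-z) = -O z := by intro z; rw [hO]; simp; ring
    have hgEO : ∀ z, g z = E z + O z := by intro z; rw [hE, hO]; ring
    have hdslopeOeven : ∀ z, dslope O 0 (-z) = dslope O 0 z := by
      intro z
      rcases eq_or_ne z 0 with rfl | hz0
      · simp
      · rw [dslope_of_ne _ (neg_ne_zero.mpr hz0), dslope_of_ne _ hz0,
          slope_def_field, slope_def_field, hOodd z, hO0]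
        field_simp
        ring_nf
        simp [hz0]
    have hsplit : ∀ z, dslope g 0 z = dslope E 0 z + dslope O 0 z := by
      intro z
      rcases eq_or_ne z 0 with rfl | hz0
      · rw [dslope_same, dslope_same, dslope_same]
        have hgfun : g = fun z => E z + O z := funext hgEO
        rw [hgfun]
        exact deriv_add (hEd.differentiableAt hD) (hOd.differentiableAt hD)
      · rw [dslope_of_ne _ hz0, dslope_of_ne _ hz0, dslope_of_ne _ hz0,
          slope_def_field, slope_def_field, slope_def_field, hgEO z, hgEO 0]
        field_simp
        ring
    -- conclude
    have hval : dslope (dslope g 0) 0 0 = deriv (dslope g 0) 0 := dslope_same _ _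
    have hderiv_split : deriv (dslope g 0) 0 = deriv (dslope E 0) 0 + deriv (dslope O 0) 0 := by
      have hfun : dslope g 0 = fun z => dslope E 0 z + dslope O 0 z := funext hsplit
      rw [hfun]
      exact deriv_add
        (((differentiableOn_dslope hD).mpr hEd).differentiableAt hD)
        (((differentiableOn_dslope hD).mpr hOd).differentiableAt hD)
    have hO2 : deriv (dslope O 0) 0 = 0 := deriv_zero_of_even hdslopeOeven
    have hE2val : deriv (dslope E 0) 0 = E₃ 0 := by
      have e1 : dslope (dslope E 0) 0 =ᶠ[nhds (0:ℂ)] dslope E₂ 0 := dslope_congr_ev ev1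
      have e2 : dslope (dslope E 0) 0 =ᶠ[nhds (0:ℂ)] E₃ := e1.trans ev2
      have h3 := e2.eq_of_nhds
      rw [dslope_same] at h3
      exact h3
    have hE₃0 : ‖E₃ 0‖ ≤ 1 - ‖u‖ ^ 2 := by
      have hden0 : (1 : ℂ) - (starRingEnd ℂ) u * E 0 = ((1 - ‖u‖ ^ 2 : ℝ) : ℂ) := by
        rw [hE0, mul_comm, Complex.mul_conj, ← Complex.normSq_eq_norm_sq]
        push_cast; ring
      rw [hE₃]
      simp only
      rw [hden0, norm_mul, Complex.norm_of_nonneg (by nlinarith [hu1', norm_nonneg u] : (0:ℝ) ≤ 1 - ‖u‖ ^ 2)]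
      calc ‖mh 0‖ * (1 - ‖u‖ ^ 2)
          ≤ 1 * (1 - ‖u‖ ^ 2) := by
            have : (0:ℝ) ≤ 1 - ‖u‖ ^ 2 := by nlinarith [hu1', norm_nonneg u]
            nlinarith [hmhb, norm_nonneg (mh 0)]
        _ = 1 - ‖u‖ ^ 2 := one_mul _
    rw [hval, hderiv_split, hO2, hE2val, add_zero]
    exact hE₃0

theorem stmt_1 (α : ℝ) (hα0 : 0 ≤ α) (hα1 : α < 1)
    (p : ℂ → ℂ) (hp : DifferentiableOn ℂ p (ball (0:ℂ) 1))
    (h0 : p 0 = 1)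
    (b : ℕ → ℂ) (hb : ∀ n, b n = iteratedDeriv n p 0 / (Nat.factorial n))
    (hre : ∀ z ∈ ball (0:ℂ) 1, α ≤ (p z).re) :
    ‖b 3 - b 1 * b 2 / (1 - (α:ℂ)) + b 1 ^ 3 / (4 * (1 - (α:ℂ)) ^ 2)‖ ≤
      2 * (1 - α) - ‖b 1‖ ^ 2 / (2 * (1 - α)) := by
  have hD : ball (0:ℂ) 1 ∈ nhds (0:ℂ) := ball_mem_nhds _ one_pos
  have h0D : (0:ℂ) ∈ ball (0:ℂ) 1 := mem_ball_self one_pos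
  have hc1 : (1 : ℂ) - (α:ℂ) ≠ 0 := by
    intro hc
    have : ((1 - α : ℝ) : ℂ) = 0 := by push_cast; linear_combination hc
    rw [Complex.ofReal_eq_zero] at this
    linarith
  set β : ℂ := 2 * (1 - (α:ℂ)) with hβdef
  have hβ : β ≠ 0 := mul_ne_zero two_ne_zero hc1
  -- the denominator of the Cayley-type transform
  have hden : ∀ z ∈ ball (0:ℂ) 1, p z + 1 - 2*(α:ℂ) ≠ 0 := by
    intro z hz hc
    have h1 : (p z + 1 - 2*(α:ℂ)).re = (p z).re + 1 - 2*α := by simp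
    rw [hc] at h1
    simp only [Complex.zero_re] at h1
    have := hre z hz; linarith
  set φ : ℂ → ℂ := fun z => (p z - 1) / (p z + 1 - 2*(α:ℂ)) with hφdef
  have hφd : DifferentiableOn ℂ φ (ball 0 1) :=
    (hp.sub (differentiableOn_const 1)).div
      ((hp.add (differentiableOn_const 1)).sub (differentiableOn_const _)) hden
  have hφ0 : φ 0 = 0 := by rw [hφdef]; simp [h0]
  have hφb : ∀ z ∈ ball (0:ℂ) 1, ‖φ z‖ ≤ 1 := by
    intro z hz
    have hkey : ‖p z - 1‖ ≤ ‖p z + 1 - 2*(α:ℂ)‖ := by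
      have e1 : (p z + 1 - 2*(α:ℂ)).re = (p z).re + 1 - 2*α := by simp
      have e2 : (p z + 1 - 2*(α:ℂ)).im = (p z).im := by simp
      have e3 : (p z - 1).re = (p z).re - 1 := by simp
      have e4 : (p z - 1).im = (p z).im := by simp
      rw [Complex.norm_def, Complex.norm_def]
      apply Real.sqrt_le_sqrt
      rw [Complex.normSq_apply, Complex.normSq_apply, e1, e2, e3, e4]
      have hw := hre z hz
      nlinarith [mul_nonneg (by linarith : (0:ℝ) ≤ (p z).re - α) (by linarith : (0:ℝ) ≤ 1 - α)]
    rw [hφdef]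
    simp only [norm_div]
    rw [div_le_one_iff]
    left
    exact ⟨norm_pos_iff.mpr (hden z hz), hkey⟩
  -- Schur function g and its iterated dslopes
  set g : ℂ → ℂ := dslope φ 0 with hgdef
  have hgd : DifferentiableOn ℂ g (ball 0 1) := (differentiableOn_dslope hD).mpr hφd
  have hgb : ∀ z ∈ ball (0:ℂ) 1, ‖g z‖ ≤ 1 := fun z hz =>
    schur_dslope_bound hφd hφb hφ0 hz
  set k : ℂ → ℂ := dslope g 0 with hkdef
  have hkd : DifferentiableOn ℂ k (ball 0 1) := (differentiableOn_dslope hD).mpr hgd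
  set m : ℂ → ℂ := dslope k 0 with hmdef
  have hmd : DifferentiableOn ℂ m (ball 0 1) := (differentiableOn_dslope hD).mpr hkd
  set a1 : ℂ := g 0 with ha1
  set a2 : ℂ := k 0 with ha2
  set a3 : ℂ := m 0 with ha3
  have hzg : ∀ z : ℂ, φ z = z * g z := by
    intro z
    rcases eq_or_ne z 0 with rfl | hz0
    · simp [hφ0]
    · rw [hgdef, dslope_of_ne _ hz0, slope_def_field, hφ0]
      field_simp
      ring
  have hgk : ∀ z : ℂ, g z = a1 + z * k z := by
    intro z
    rcases eq_or_ne z 0 with rfl | hz0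
    · simp [ha1]
    · rw [hkdef, dslope_of_ne _ hz0, slope_def_field, ← ha1]
      field_simp
      ring
  have hkm : ∀ z : ℂ, k z = a2 + z * m z := by
    intro z
    rcases eq_or_ne z 0 with rfl | hz0
    · simp [ha2]
    · rw [hmdef, dslope_of_ne _ hz0, slope_def_field, ← ha2]
      field_simp
      ring
  -- nonvanishing of 1 - z * g z
  have hrel : ∀ z ∈ ball (0:ℂ) 1, (1 - z * g z) * (p z + 1 - 2*(α:ℂ)) = β := by
    intro z hz
    rw [← hzg z, hφdef]
    have hd := hden z hz
    field_simp
    ring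
  have hne : ∀ z ∈ ball (0:ℂ) 1, 1 - z * g z ≠ 0 := by
    intro z hz hc
    have := hrel z hz
    rw [hc, zero_mul] at this
    exact hβ this.symm
  -- continuity at 0
  have hgcont : ContinuousAt g 0 := (hgd.differentiableAt hD).continuousAt
  have hkcont : ContinuousAt k 0 := (hkd.differentiableAt hD).continuousAt
  have hmcont : ContinuousAt m 0 := (hmd.differentiableAt hD).continuousAt
  have hdencont : ContinuousAt (fun z : ℂ => 1 - z * g z) 0 :=
    continuousAt_const.sub (continuousAt_id.mul hgcont)
  have hden0 : (1 : ℂ) - (0:ℂ) * g 0 ≠ 0 := by simp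
  -- the three quotient functions
  set Q : ℂ → ℂ := fun z => β * g z / (1 - z * g z) with hQdef
  set Q₂ : ℂ → ℂ := fun z => β * (k z + a1 * g z) / (1 - z * g z) with hQ₂def
  set Q₃ : ℂ → ℂ := fun z => β * (m z + a1 * k z + (a2 + a1^2) * g z) / (1 - z * g z) with hQ₃def
  have hQcont : ContinuousAt Q 0 := (continuousAt_const.mul hgcont).div hdencont hden0
  have hQ₂cont : ContinuousAt Q₂ 0 :=
    (continuousAt_const.mul (hkcont.add (continuousAt_const.mul hgcont))).div hdencont hden0
  have hQ₃cont : ContinuousAt Q₃ 0 :=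
    (continuousAt_const.mul ((hmcont.add (continuousAt_const.mul hkcont)).add
      (continuousAt_const.mul hgcont))).div hdencont hden0
  have hQ0 : Q 0 = β * a1 := by rw [hQdef]; simp [← ha1]
  have hQ₂0 : Q₂ 0 = β * (a2 + a1 * a1) := by
    rw [hQ₂def]; simp [← ha2, ← ha1]
  have hQ₃0 : Q₃ 0 = β * (a3 + a1 * a2 + (a2 + a1^2) * a1) := by
    rw [hQ₃def]; simp [← ha3, ← ha2, ← ha1]
  -- the dslope chain for p
  have ev1 : dslope p 0 =ᶠ[nhds (0:ℂ)] Q := by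
    apply dslope_factor_ev hQcont
    filter_upwards [hD] with z hz
    have e : (p z - 1) * (1 - z * g z) = β * (z * g z) := by
      rw [← hzg z]
      simp only [hφdef]
      have hd := hden z hz
      field_simp
      rw [hβdef]
      ring
    rw [h0]
    simp only [hQdef]
    field_simp [hne z hz]
    linear_combination e
  have ev2 : dslope Q 0 =ᶠ[nhds (0:ℂ)] Q₂ := by
    apply dslope_factor_ev hQ₂cont
    filter_upwards [hD] with z hz
    rw [hQ0]
    simp only [hQdef, hQ₂def]
    field_simp [hne z hz, show 1 - g z * z ≠ 0 by rw [mul_comm]; exact hne z hz]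
    linear_combination hgk z
  have ev3 : dslope Q₂ 0 =ᶠ[nhds (0:ℂ)] Q₃ := by
    apply dslope_factor_ev hQ₃cont
    filter_upwards [hD] with z hz
    rw [hQ₂0]
    simp only [hQ₂def, hQ₃def]
    field_simp [hne z hz, show 1 - g z * z ≠ 0 by rw [mul_comm]; exact hne z hz]
    linear_combination hkm z + a1 * hgk z
  -- values
  have bv1 : dslope p 0 0 = Q 0 := ev1.eq_of_nhds
  have ev1' : dslope (dslope p 0) 0 =ᶠ[nhds (0:ℂ)] Q₂ := (dslope_congr_ev ev1).trans ev2
  have bv2 : dslope (dslope p 0) 0 0 = Q₂ 0 := ev1'.eq_of_nhds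
  have ev2' : dslope (dslope (dslope p 0) 0) 0 =ᶠ[nhds (0:ℂ)] Q₃ :=
    (dslope_congr_ev ev1').trans ev3
  have bv3 : dslope (dslope (dslope p 0) 0) 0 0 = Q₃ 0 := ev2'.eq_of_nhds
  -- identify b n with iterated dslopes via the power series
  have han : AnalyticAt ℂ p 0 := hp.analyticAt hD
  obtain ⟨P, hAt⟩ := han
  obtain ⟨r, hPS⟩ := id hAt
  have hbn : ∀ n : ℕ, b n = ((Function.swap dslope (0:ℂ))^[n] p) 0 := by
    intro n
    have h1 : ((Function.swap dslope (0:ℂ))^[n] p) 0 = P.coeff n := by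
      have h2 : (FormalMultilinearSeries.fslope^[n] P).coeff 0
          = ((Function.swap dslope (0:ℂ))^[n] p) 0 :=
        (hAt.has_fpower_series_iterate_dslope_fslope n).coeff_zero 1
      rw [← h2, FormalMultilinearSeries.coeff_iterate_fslope, zero_add]
    have h4 : (n.factorial : ℂ) * P.coeff n
        = iteratedDeriv n p 0 := by
      have h5 := hPS.factorial_smul (1:ℂ) n
      rw [iteratedDeriv_eq_iteratedFDeriv, ← h5, nsmul_eq_mul]
      rfl
    rw [hb n, ← h4, h1]
    exact mul_div_cancel_left₀ _ (by exact_mod_cast n.factorial_ne_zero)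
  -- compute b 1, b 2, b 3
  have hi1 : ((Function.swap dslope (0:ℂ))^[1] p) 0 = dslope p 0 0 := by
    simp [Function.swap]
  have hi2 : ((Function.swap dslope (0:ℂ))^[2] p) 0 = dslope (dslope p 0) 0 0 := by
    simp [Function.iterate_succ_apply, Function.swap]
  have hi3 : ((Function.swap dslope (0:ℂ))^[3] p) 0 = dslope (dslope (dslope p 0) 0) 0 0 := by
    simp [Function.iterate_succ_apply, Function.swap]
  have hb1 : b 1 = β * a1 := by rw [hbn 1, hi1, bv1, hQ0]
  have hb2 : b 2 = β * (a2 + a1 * a1) := by rw [hbn 2, hi2, bv2, hQ₂0]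
  have hb3 : b 3 = β * (a3 + a1 * a2 + (a2 + a1^2) * a1) := by rw [hbn 3, hi3, bv3, hQ₃0]
  -- the core inequality
  have hcore : ‖a3‖ ≤ 1 - ‖a1‖ ^ 2 := by
    have := schur_coeff2 hgd hgb
    rw [← hkdef, ← hmdef, ← ha3, ← ha1] at this
    exact this
  -- final arithmetic
  have hLHS : b 3 - b 1 * b 2 / (1 - (α:ℂ)) + b 1 ^ 3 / (4 * (1 - (α:ℂ)) ^ 2)
      = β * a3 := by
    rw [hb1, hb2, hb3, hβdef]
    field_simp
    ring
  have habsβ : ‖β‖ = 2 * (1 - α) := by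
    rw [hβdef]
    rw [show (2:ℂ) * (1 - (α:ℂ)) = ((2 * (1 - α) : ℝ) : ℂ) by push_cast; ring]
    rw [Complex.norm_of_nonneg (by linarith : (0:ℝ) ≤ 2 * (1 - α))]
  have hβpos : (0:ℝ) < 2 * (1 - α) := by linarith
  rw [hLHS, norm_mul, habsβ, hb1, norm_mul, habsβ]
  have hRHS : 2*(1-α) - (2*(1-α) * ‖a1‖)^2/(2*(1-α))
      = 2*(1-α) * (1 - ‖a1‖ ^2) := by
    field_simp
  rw [hRHS]
  exact mul_le_mul_of_nonneg_left hcore (le_of_lt hβpos)
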